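/- arXiv:2111.02501 — 2 statements merged into one kernel-verified Lean document; each statement's English description precedes it below -/
import Mathlib

section
/- Let R be a commutative Krasner hyperring with nonzero identity, N a proper hyperideal of R, and φ : L(R) → L(R) ∪ {∅} a function with φ(N) ⊆ N. Then the following are equivalent: (i) N is a φ-prime hyperideal of R; (ii) for every a ∈ R − N, (N : a) = N ∪ (φ(N) : a); (iii) for every a ∈ R − N, (N : a) = N or (N : a) = (φ(N) : a); (iv) for all hyperideals K, L of R with K∘L ⊆ N and K∘L ⊄ φ(N), either K ⊆ N or L ⊆ N. -/
universe u

/-- A commutative Krasner hyperring with nonzero identity. -/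
class KrasnerHyperring (R : Type u) where
  hadd : R → R → Set R
  mul : R → R → R
  zero : R
  one : R
  neg : R → R
  hadd_nonempty : ∀ a b : R, (hadd a b).Nonempty
  hadd_comm : ∀ a b : R, hadd a b = hadd b a
  hadd_assoc : ∀ a b c : R, (⋃ x ∈ hadd a b, hadd x c) = ⋃ y ∈ hadd b c, hadd a y
  hadd_zero : ∀ a : R, hadd a zero = {a}
  zero_mem_hadd_neg : ∀ a : R, zero ∈ hadd a (neg a)
  neg_unique : ∀ a b : R, zero ∈ hadd a b → b = neg a
  reversible : ∀ a b c : R, c ∈ hadd a b → b ∈ hadd (neg a) c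
  mul_assoc : ∀ a b c : R, mul (mul a b) c = mul a (mul b c)
  mul_comm : ∀ a b : R, mul a b = mul b a
  mul_one : ∀ a : R, mul a one = a
  mul_zero : ∀ a : R, mul a zero = zero
  one_ne_zero : one ≠ zero
  distrib : ∀ a b c : R, (fun x => mul a x) '' hadd b c = hadd (mul a b) (mul a c)

namespace KrasnerHyperring

variable {R : Type u} [KrasnerHyperring R]

/-- A hyperideal of a Krasner hyperring. -/
structure Hyperideal (R : Type u) [KrasnerHyperring R] where
  carrier : Set R
  nonempty' : carrier.Nonempty
  hadd_subset' : ∀ a ∈ carrier, ∀ b ∈ carrier, hadd a b ⊆ carrier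
  neg_mem' : ∀ a ∈ carrier, neg a ∈ carrier
  mul_mem' : ∀ r : R, ∀ a ∈ carrier, mul r a ∈ carrier

instance : SetLike (Hyperideal R) R where
  coe := Hyperideal.carrier
  coe_injective := by rintro ⟨⟩ ⟨⟩ h; congr

/-- A hyperideal is proper if it is not the whole hyperring. -/
def Hyperideal.IsProper (N : Hyperideal R) : Prop := (N : Set R) ≠ Set.univ

/-- `A ⊕ B` for subsets. -/
def haddSet (A B : Set R) : Set R := ⋃ a ∈ A, ⋃ b ∈ B, hadd a b

/-- `A ∘ B` : set of all products. -/
def mulSet (A B : Set R) : Set R := {x : R | ∃ a ∈ A, ∃ b ∈ B, x = mul a b}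

/-- The hyperideal generated by a set (as a set). -/
def genIdeal (S : Set R) : Set R := ⋂₀ {C : Set R | (∃ I : Hyperideal R, C = ↑I) ∧ S ⊆ C}

/-- Products of `n` elements of `S`. -/
def setPow (S : Set R) : ℕ → Set R
  | 0 => Set.univ
  | 1 => S
  | (n+2) => mulSet S (setPow S (n+1))

/-- `N^n` : the hyperideal generated by products of `n` elements of `N`. -/
def idealPow (N : Hyperideal R) (n : ℕ) : Set R := genIdeal (setPow (↑N) n)

/-- Powers of an element. -/
def hpow (a : R) : ℕ → R
  | 0 => one
  | (n+1) => mul a (hpow a n)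

/-- The radical of a set. -/
def radical (A : Set R) : Set R := {a : R | ∃ n : ℕ, 0 < n ∧ hpow a n ∈ A}

/-- `(A : a)`. -/
def colon (A : Set R) (a : R) : Set R := {r : R | mul a r ∈ A}

/-- `(A : M)` for a set `M`. -/
def colonSet (A B : Set R) : Set R := {r : R | ∀ b ∈ B, mul r b ∈ A}

/-- Prime hyperideal. -/
def IsPrime (N : Hyperideal R) : Prop :=
  N.IsProper ∧ ∀ a b : R, mul a b ∈ N → a ∈ N ∨ b ∈ N

/-- Weakly prime hyperideal. -/
def IsWeaklyPrime (N : Hyperideal R) : Prop :=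
  N.IsProper ∧ ∀ a b : R, mul a b ∈ N → mul a b ≠ zero → a ∈ N ∨ b ∈ N

/-- `φ`-prime hyperideal. -/
def IsPhiPrime (φ : Hyperideal R → Set R) (N : Hyperideal R) : Prop :=
  N.IsProper ∧ ∀ a b : R, mul a b ∈ N → mul a b ∉ φ N → a ∈ N ∨ b ∈ N

/-- Primary hyperideal. -/
def IsPrimary (N : Hyperideal R) : Prop :=
  N.IsProper ∧ ∀ a b : R, mul a b ∈ N → a ∈ N ∨ ∃ k : ℕ, 0 < k ∧ hpow b k ∈ N

/-- `φ`-primary hyperideal. -/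
def IsPhiPrimary (φ : Hyperideal R → Set R) (N : Hyperideal R) : Prop :=
  N.IsProper ∧ ∀ a b : R, mul a b ∈ N → mul a b ∉ φ N →
    a ∈ N ∨ ∃ k : ℕ, 0 < k ∧ hpow b k ∈ N

/-- `δ`-primary hyperideal. -/
def IsDeltaPrimary (δ : Hyperideal R → Hyperideal R) (N : Hyperideal R) : Prop :=
  N.IsProper ∧ ∀ a b : R, mul a b ∈ N → a ∈ N ∨ b ∈ δ N

/-- `φ`-`δ`-primary hyperideal. -/
def IsPhiDeltaPrimary (φ : Hyperideal R → Set R) (δ : Hyperideal R → Hyperideal R)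
    (N : Hyperideal R) : Prop :=
  N.IsProper ∧ ∀ a b : R, mul a b ∈ N → mul a b ∉ φ N → a ∈ N ∨ b ∈ δ N

/-- `φ : L(R) → L(R) ∪ {∅}` : every value is a hyperideal or the empty set. -/
def MapsToIdealOrEmpty (φ : Hyperideal R → Set R) : Prop :=
  ∀ I : Hyperideal R, φ I = ∅ ∨ ∃ J : Hyperideal R, φ I = ↑J

/-- A reduction function. -/
def IsReduction (φ : Hyperideal R → Set R) : Prop :=
  MapsToIdealOrEmpty φ ∧ (∀ I : Hyperideal R, φ I ⊆ ↑I) ∧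
    ∀ I J : Hyperideal R, (I : Set R) ⊆ ↑J → φ I ⊆ φ J

/-- An expansion function. -/
def IsExpansion (δ : Hyperideal R → Hyperideal R) : Prop :=
  (∀ I : Hyperideal R, (I : Set R) ⊆ ↑(δ I)) ∧
    ∀ I J : Hyperideal R, (I : Set R) ⊆ ↑J → (δ I : Set R) ⊆ ↑(δ J)

/-- `φ_w(N) = ⋂_{n ≥ 1} N^n`. -/
def phiW (N : Hyperideal R) : Set R := ⋂ (n : ℕ) (_ : 1 ≤ n), idealPow N n

lemma zero_mem (N : Hyperideal R) : zero ∈ N := by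
  obtain ⟨a, ha⟩ := N.nonempty'
  exact N.hadd_subset' a ha (neg a) (N.neg_mem' a ha) (zero_mem_hadd_neg a)

lemma proper_of_subset_proper {M T : Hyperideal R} (h : (M : Set R) ⊆ ↑T)
    (hT : T.IsProper) : M.IsProper :=
  fun hu => hT (Set.univ_subset_iff.mp (hu ▸ h))

lemma mul_mem_hadd' (a : R) {b c x : R} (h : x ∈ hadd b c) :
    mul a x ∈ hadd (mul a b) (mul a c) := by
  rw [← distrib]; exact ⟨x, h, rfl⟩

lemma mul_neg' (a b : R) : mul a (neg b) = neg (mul a b) :=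
  neg_unique _ _ (by
    have := mul_mem_hadd' a (zero_mem_hadd_neg b)
    rwa [mul_zero] at this)

lemma rev₁ {a b c : R} (h : c ∈ hadd a b) : a ∈ hadd (neg b) c :=
  reversible b a c (by rw [hadd_comm]; exact h)

lemma mem_of_hadd_mem {N : Hyperideal R} {a b : R} (ha : a ∈ N) (hb : b ∈ N)
    {c : R} (h : c ∈ hadd a b) : c ∈ N :=
  N.hadd_subset' a ha b hb h

lemma phi_hadd_mem {φ : Hyperideal R → Set R} (hφ : MapsToIdealOrEmpty φ)
    {N : Hyperideal R} {x y c : R} (hx : x ∈ φ N) (hy : y ∈ φ N)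
    (h : c ∈ hadd (neg x) y) : c ∈ φ N := by
  rcases hφ N with he | ⟨J, hJ⟩
  · rw [he] at hx; exact absurd hx (Set.notMem_empty x)
  · rw [hJ] at hx hy ⊢
    exact J.hadd_subset' _ (J.neg_mem' x hx) y hy h

/-- The principal hyperideal generated by `a`. -/
def principal (a : R) : Hyperideal R where
  carrier := {x | ∃ r : R, x = mul a r}
  nonempty' := ⟨a, one, (mul_one a).symm⟩
  hadd_subset' := by
    rintro _ ⟨r, rfl⟩ _ ⟨s, rfl⟩ x hx
    rw [← distrib] at hx
    obtain ⟨t, _, rfl⟩ := hx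
    exact ⟨t, rfl⟩
  neg_mem' := by
    rintro _ ⟨r, rfl⟩
    exact ⟨neg r, (mul_neg' a r).symm⟩
  mul_mem' := by
    rintro s _ ⟨r, rfl⟩
    exact ⟨mul s r, by rw [← mul_assoc, ← mul_assoc, mul_comm s a]⟩

lemma self_mem_principal (a : R) : a ∈ principal a := ⟨one, (mul_one a).symm⟩

/-- characterizations of `φ`-prime hyperideals. -/
theorem phiPrime_characterizations {R : Type u} [KrasnerHyperring R]
    (φ : Hyperideal R → Set R) (hφ : MapsToIdealOrEmpty φ)
    (N : Hyperideal R) (hN : N.IsProper) (hφN : φ N ⊆ (N : Set R)) :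
    (IsPhiPrime φ N ↔
      ∀ a : R, a ∉ (N : Set R) → colon (N : Set R) a = (N : Set R) ∪ colon (φ N) a) ∧
    (IsPhiPrime φ N ↔
      ∀ a : R, a ∉ (N : Set R) →
        colon (N : Set R) a = (N : Set R) ∨ colon (N : Set R) a = colon (φ N) a) ∧
    (IsPhiPrime φ N ↔
      ∀ K L : Hyperideal R, mulSet (K : Set R) (L : Set R) ⊆ (N : Set R) →
        ¬ mulSet (K : Set R) (L : Set R) ⊆ φ N →
        (K : Set R) ⊆ (N : Set R) ∨ (L : Set R) ⊆ (N : Set R)) := by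
  -- (i) → (ii)
  have h12 : IsPhiPrime φ N →
      ∀ a : R, a ∉ (N : Set R) → colon (N : Set R) a = (N : Set R) ∪ colon (φ N) a := by
    rintro ⟨_, hp⟩ a ha
    ext r
    constructor
    · intro hr
      by_cases hφr : mul a r ∈ φ N
      · exact Or.inr hφr
      · rcases hp a r hr hφr with h | h
        · exact absurd h ha
        · exact Or.inl h
    · rintro (hr | hr)
      · exact N.mul_mem' a r hr
      · exact hφN hr
  -- (ii) → (iii)
  have h23 : (∀ a : R, a ∉ (N : Set R) →
        colon (N : Set R) a = (N : Set R) ∪ colon (φ N) a) →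
      ∀ a : R, a ∉ (N : Set R) →
        colon (N : Set R) a = (N : Set R) ∨ colon (N : Set R) a = colon (φ N) a := by
    intro h a ha
    have hu := h a ha
    by_contra hc
    push_neg at hc
    obtain ⟨h1, h2⟩ := hc
    -- there is x ∈ colon N a \ N, so x ∈ colon (φ N) a
    have hNsub : (N : Set R) ⊆ colon (N : Set R) a := fun r hr => N.mul_mem' a r hr
    have hCsub : colon (φ N) a ⊆ colon (N : Set R) a := fun r hr => hφN hr
    obtain ⟨x, hxA, hxN⟩ : ∃ x, x ∈ colon (N : Set R) a ∧ x ∉ (N : Set R) := by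
      by_contra hc; push_neg at hc
      exact h1 (Set.Subset.antisymm hc hNsub)
    obtain ⟨y, hyA, hyC⟩ : ∃ y, y ∈ colon (N : Set R) a ∧ y ∉ colon (φ N) a := by
      by_contra hc; push_neg at hc
      exact h2 (Set.Subset.antisymm hc hCsub)
    have hxC : x ∈ colon (φ N) a := by
      rcases hu ▸ hxA with h | h
      · exact absurd h hxN
      · exact h
    have hyN : y ∈ (N : Set R) := by
      rcases hu ▸ hyA with h | h
      · exact h
      · exact absurd h hyC
    obtain ⟨z, hz⟩ := hadd_nonempty x y
    have hzA : z ∈ colon (N : Set R) a :=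
      mem_of_hadd_mem hxA (N.mul_mem' a y hyN) (c := mul a z) (mul_mem_hadd' a hz)
    rcases hu ▸ hzA with hzN | hzC
    · -- z ∈ N ⟹ x ∈ hadd (neg y) z ⊆ N
      have hx : x ∈ hadd (neg y) z := rev₁ hz
      exact hxN (mem_of_hadd_mem (N.neg_mem' y hyN) hzN hx)
    · -- z ∈ colon (φ N) a ⟹ y ∈ hadd (neg x) z, mul a y ∈ φ N
      have hy : y ∈ hadd (neg x) z := reversible x y z hz
      have : mul a y ∈ hadd (mul a (neg x)) (mul a z) := mul_mem_hadd' a hy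
      rw [mul_neg'] at this
      exact hyC (phi_hadd_mem hφ hxC hzC this)
  -- (iii) → (i)
  have h31 : (∀ a : R, a ∉ (N : Set R) →
        colon (N : Set R) a = (N : Set R) ∨ colon (N : Set R) a = colon (φ N) a) →
      IsPhiPrime φ N := by
    intro h
    refine ⟨hN, fun a b hab hnab => ?_⟩
    by_cases ha : a ∈ (N : Set R)
    · exact Or.inl ha
    · have hb : b ∈ colon (N : Set R) a := hab
      rcases h a ha with hc | hc
      · rw [hc] at hb; exact Or.inr hb
      · rw [hc] at hb; exact absurd hb hnab
  -- (i) → (iv)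
  have h14 : IsPhiPrime φ N →
      ∀ K L : Hyperideal R, mulSet (K : Set R) (L : Set R) ⊆ (N : Set R) →
        ¬ mulSet (K : Set R) (L : Set R) ⊆ φ N →
        (K : Set R) ⊆ (N : Set R) ∨ (L : Set R) ⊆ (N : Set R) := by
    rintro ⟨_, hp⟩ K L hKL hnot
    by_contra hc
    push_neg at hc
    obtain ⟨hK, hL⟩ := hc
    obtain ⟨a, haK, haN⟩ := Set.not_subset.mp hK
    obtain ⟨b, hbL, hbN⟩ := Set.not_subset.mp hL
    obtain ⟨x, hx, hxφ⟩ := Set.not_subset.mp hnot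
    obtain ⟨k, hkK, l, hlL, rfl⟩ := hx
    have hklN : mul k l ∈ (N : Set R) := hKL ⟨k, hkK, l, hlL, rfl⟩
    -- general fact: products of elements outside N (one from K, one from L) lie in φ N
    have key : ∀ u ∈ (K : Set R), u ∉ (N : Set R) → ∀ v ∈ (L : Set R), v ∉ (N : Set R) →
        mul u v ∈ φ N := by
      intro u huK huN v hvL hvN
      by_contra hφuv
      rcases hp u v (hKL ⟨u, huK, v, hvL, rfl⟩) hφuv with h | h
      · exact huN h
      · exact hvN h
    by_cases hkN : k ∈ (N : Set R)
    · by_cases hlN : l ∈ (N : Set R)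
      · -- k ∈ N, l ∈ N
        obtain ⟨z, hz⟩ := hadd_nonempty a k
        obtain ⟨w, hw⟩ := hadd_nonempty b l
        have hzK : z ∈ (K : Set R) := K.hadd_subset' a haK k hkK hz
        have hwL : w ∈ (L : Set R) := L.hadd_subset' b hbL l hlL hw
        have hzN : z ∉ (N : Set R) := fun h =>
          haN (mem_of_hadd_mem (N.neg_mem' k hkN) h (rev₁ hz))
        have hwN : w ∉ (N : Set R) := fun h =>
          hbN (mem_of_hadd_mem (N.neg_mem' l hlN) h (rev₁ hw))
        have habφ : mul a b ∈ φ N := key a haK haN b hbL hbN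
        have hawφ : mul a w ∈ φ N := key a haK haN w hwL hwN
        have hzbφ : mul z b ∈ φ N := key z hzK hzN b hbL hbN
        have hzwφ : mul z w ∈ φ N := key z hzK hzN w hwL hwN
        have hlmem : l ∈ hadd (neg b) w := reversible b l w hw
        have hzlφ : mul z l ∈ φ N := by
          have := mul_mem_hadd' z hlmem
          rw [mul_neg'] at this
          exact phi_hadd_mem hφ hzbφ hzwφ this
        have halφ : mul a l ∈ φ N := by
          have := mul_mem_hadd' a hlmem
          rw [mul_neg'] at this
          exact phi_hadd_mem hφ habφ hawφ this
        have hkmem : k ∈ hadd (neg a) z := reversible a k z hz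
        have : mul l k ∈ φ N := by
          have h' := mul_mem_hadd' l hkmem
          rw [mul_neg'] at h'
          exact phi_hadd_mem hφ (by rw [mul_comm]; exact halφ)
            (by rw [mul_comm]; exact hzlφ) h'
        exact hxφ (by rw [mul_comm] at this; exact this)
      · -- k ∈ N, l ∉ N : show hadd a k ⊆ N, contradiction with a ∉ N
        have hsub : ∀ z ∈ hadd a k, z ∈ (N : Set R) := by
          intro z hz
          have hzK : z ∈ (K : Set R) := K.hadd_subset' a haK k hkK hz
          have hzlN : mul z l ∈ (N : Set R) := hKL ⟨z, hzK, l, hlL, rfl⟩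
          have hmem : mul l z ∈ hadd (mul l a) (mul l k) := mul_mem_hadd' l hz
          have hzlφ : mul z l ∉ φ N := by
            intro hin
            have hrev : mul l k ∈ hadd (neg (mul l a)) (mul l z) :=
              reversible (mul l a) (mul l k) (mul l z) hmem
            have hlaφ : mul l a ∈ φ N := by
              rw [mul_comm]; exact key a haK haN l hlL hlN
            have : mul l k ∈ φ N :=
              phi_hadd_mem hφ hlaφ (by rw [mul_comm]; exact hin) hrev
            exact hxφ (by rw [mul_comm] at this; exact this)
          rcases hp z l hzlN hzlφ with h | h
          · exact h
          · exact absurd h hlN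
        obtain ⟨z, hz⟩ := hadd_nonempty a k
        exact haN (mem_of_hadd_mem (N.neg_mem' k hkN) (hsub z hz) (rev₁ hz))
    · -- k ∉ N, hence l ∈ N : show hadd b l ⊆ N, contradiction with b ∉ N
      have hlN : l ∈ (N : Set R) := (hp k l hklN hxφ).resolve_left hkN
      have hsub : ∀ w ∈ hadd b l, w ∈ (N : Set R) := by
        intro w hw
        have hwL : w ∈ (L : Set R) := L.hadd_subset' b hbL l hlL hw
        have hkwN : mul k w ∈ (N : Set R) := hKL ⟨k, hkK, w, hwL, rfl⟩
        have hmem : mul k w ∈ hadd (mul k b) (mul k l) := mul_mem_hadd' k hw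
        have hkwφ : mul k w ∉ φ N := by
          intro hin
          have hrev : mul k l ∈ hadd (neg (mul k b)) (mul k w) :=
            reversible (mul k b) (mul k l) (mul k w) hmem
          have hkbφ : mul k b ∈ φ N := key k hkK hkN b hbL hbN
          exact hxφ (phi_hadd_mem hφ hkbφ hin hrev)
        rcases hp k w hkwN hkwφ with h | h
        · exact absurd h hkN
        · exact h
      obtain ⟨w, hw⟩ := hadd_nonempty b l
      exact hbN (mem_of_hadd_mem (N.neg_mem' l hlN) (hsub w hw) (rev₁ hw))
  -- (iv) → (i)
  have h41 : (∀ K L : Hyperideal R, mulSet (K : Set R) (L : Set R) ⊆ (N : Set R) →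
        ¬ mulSet (K : Set R) (L : Set R) ⊆ φ N →
        (K : Set R) ⊆ (N : Set R) ∨ (L : Set R) ⊆ (N : Set R)) →
      IsPhiPrime φ N := by
    intro h
    refine ⟨hN, fun a b hab hnab => ?_⟩
    have hsub : mulSet ((principal a : Hyperideal R) : Set R)
        ((principal b : Hyperideal R) : Set R) ⊆ (N : Set R) := by
      rintro _ ⟨_, ⟨r, rfl⟩, _, ⟨s, rfl⟩, rfl⟩
      have : mul (mul a r) (mul b s) = mul (mul r s) (mul a b) := by
        rw [mul_assoc a r, ← mul_assoc r b, mul_comm r b, mul_assoc b r, ← mul_assoc a b,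
          mul_comm (mul a b)]
      rw [this]
      exact N.mul_mem' _ _ hab
    have hnsub : ¬ mulSet ((principal a : Hyperideal R) : Set R)
        ((principal b : Hyperideal R) : Set R) ⊆ φ N := by
      intro hs
      exact hnab (hs ⟨a, self_mem_principal a, b, self_mem_principal b, rfl⟩)
    rcases h (principal a) (principal b) hsub hnsub with h' | h'
    · exact Or.inl (h' (self_mem_principal a))
    · exact Or.inr (h' (self_mem_principal b))
  exact ⟨⟨h12, fun h => h31 (h23 h)⟩, ⟨fun h => h23 (h12 h), h31⟩, ⟨h14, h41⟩⟩

end KrasnerHyperring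
end

section
/- Let R be a commutative Krasner hyperring with nonzero identity and let T be a proper hyperideal of R. If T is a φ-primary hyperideal of R for a function φ : L(R) → L(R) ∪ {∅} with φ ≤ φ₃ (i.e. φ(N) ⊆ N³ for every hyperideal N), then T is a w-primary hyperideal of R. -/
universe u

namespace KrasnerHyperring

variable {R : Type u} [KrasnerHyperring R]

/-! ### Auxiliary lemmas for Statement 11 -/

lemma mul_neg_eq (r a : R) : mul r (neg a) = neg (mul r a) := by
  apply neg_unique
  have h : mul r zero ∈ (fun x => mul r x) '' hadd a (neg a) :=
    ⟨zero, zero_mem_hadd_neg a, rfl⟩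
  rw [distrib, mul_zero] at h
  exact h

/-- The hyperideal generated by a set. -/
def genHyperideal (S : Set R) : Hyperideal R where
  carrier := genIdeal S
  nonempty' := ⟨zero, fun C hC => by obtain ⟨⟨I, rfl⟩, -⟩ := hC; exact zero_mem I⟩
  hadd_subset' := fun a ha b hb x hx C hC => by
    obtain ⟨⟨I, rfl⟩, hS⟩ := hC
    exact I.hadd_subset' a (ha _ ⟨⟨I, rfl⟩, hS⟩) b (hb _ ⟨⟨I, rfl⟩, hS⟩) hx
  neg_mem' := fun a ha C hC => by
    obtain ⟨⟨I, rfl⟩, hS⟩ := hC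
    exact I.neg_mem' a (ha _ ⟨⟨I, rfl⟩, hS⟩)
  mul_mem' := fun r a ha C hC => by
    obtain ⟨⟨I, rfl⟩, hS⟩ := hC
    exact I.mul_mem' r a (ha _ ⟨⟨I, rfl⟩, hS⟩)

lemma coe_genHyperideal (S : Set R) : (genHyperideal S : Set R) = genIdeal S := rfl

lemma subset_genIdeal {S : Set R} : S ⊆ genIdeal S := fun _ hx _ hC => hC.2 hx

lemma genIdeal_subset {S : Set R} (I : Hyperideal R) (h : S ⊆ ↑I) : genIdeal S ⊆ ↑I :=
  fun _ hx => hx ↑I ⟨⟨I, rfl⟩, h⟩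

lemma genIdeal_mono {S S' : Set R} (h : S ⊆ S') : genIdeal S ⊆ genIdeal S' :=
  genIdeal_subset (genHyperideal S') (h.trans subset_genIdeal)

lemma mul_mem_genIdeal_image {S : Set R} {x : R} (r : R) (hx : x ∈ genIdeal S) :
    mul r x ∈ genIdeal ((fun s => mul r s) '' S) := by
  let J : Hyperideal R :=
    { carrier := {y | mul r y ∈ genIdeal ((fun s => mul r s) '' S)}
      nonempty' := ⟨zero, by
        show mul r zero ∈ genIdeal ((fun s => mul r s) '' S)
        rw [mul_zero]
        exact zero_mem (genHyperideal ((fun s => mul r s) '' S))⟩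
      hadd_subset' := fun a ha b hb c hc => by
        have : mul r c ∈ (fun x => mul r x) '' hadd a b := ⟨c, hc, rfl⟩
        rw [distrib] at this
        exact (genHyperideal ((fun s => mul r s) '' S)).hadd_subset' _ ha _ hb this
      neg_mem' := fun a ha => by
        show mul r (neg a) ∈ genIdeal _
        rw [mul_neg_eq]
        exact (genHyperideal ((fun s => mul r s) '' S)).neg_mem' _ ha
      mul_mem' := fun s a ha => by
        show mul r (mul s a) ∈ genIdeal _
        rw [← mul_assoc, mul_comm r s, mul_assoc]
        exact (genHyperideal ((fun s => mul r s) '' S)).mul_mem' s _ ha }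
  exact genIdeal_subset J (fun s hs => subset_genIdeal ⟨s, hs, rfl⟩) hx

lemma idealPow_succ_subset (T : Hyperideal R) (n : ℕ) :
    idealPow T (n + 2) ⊆ idealPow T (n + 1) := by
  refine genIdeal_subset (genHyperideal (setPow (T : Set R) (n + 1))) ?_
  rintro x ⟨t, ht, y, hy, rfl⟩
  exact (genHyperideal _).mul_mem' t y (subset_genIdeal hy)

lemma idealPow_up (T : Hyperideal R)
    (H2 : ∀ p ∈ (T : Set R), ∀ q ∈ (T : Set R), mul p q ∈ idealPow T 3) :
    ∀ n : ℕ, idealPow T (n + 2) ⊆ idealPow T (n + 3) := by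
  intro n
  induction n with
  | zero =>
    refine genIdeal_subset (genHyperideal (setPow (T : Set R) 3)) ?_
    rintro x ⟨p, hp, q, hq, rfl⟩
    exact H2 p hp q hq
  | succ m ih =>
    refine genIdeal_subset (genHyperideal (setPow (T : Set R) (m + 4))) ?_
    rintro x ⟨t, ht, y, hy, rfl⟩
    have h1 : y ∈ genIdeal (setPow (T : Set R) (m + 3)) := ih (subset_genIdeal hy)
    refine genIdeal_mono ?_ (mul_mem_genIdeal_image t h1)
    rintro z ⟨w, hw, rfl⟩
    exact ⟨t, ht, w, hw, rfl⟩

lemma hpow_hadd_mem (T : Hyperideal R) {b p c : R} (hp : p ∈ (T : Set R))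
    (hc : c ∈ hadd b p) :
    ∀ k : ℕ, ∃ t ∈ (T : Set R), hpow c (k + 1) ∈ hadd (hpow b (k + 1)) t := by
  intro k
  induction k with
  | zero =>
    refine ⟨p, hp, ?_⟩
    show mul c (hpow c 0) ∈ hadd (mul b (hpow b 0)) p
    show mul c one ∈ hadd (mul b one) p
    rw [mul_one, mul_one]
    exact hc
  | succ k ih =>
    obtain ⟨t, ht, hk⟩ := ih
    have h1 : mul c (hpow c (k + 1)) ∈ hadd (mul c (hpow b (k + 1))) (mul c t) := by
      have : mul c (hpow c (k + 1)) ∈ (fun x => mul c x) '' hadd (hpow b (k + 1)) t :=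
        ⟨_, hk, rfl⟩
      rwa [distrib] at this
    have h2 : mul c (hpow b (k + 1)) ∈ hadd (hpow b (k + 2)) (mul (hpow b (k + 1)) p) := by
      have : mul (hpow b (k + 1)) c ∈
          (fun x => mul (hpow b (k + 1)) x) '' hadd b p := ⟨c, hc, rfl⟩
      rw [distrib] at this
      rw [mul_comm c (hpow b (k + 1))]
      have he : mul (hpow b (k + 1)) b = hpow b (k + 2) := by
        show _ = mul b (hpow b (k + 1)); rw [mul_comm]
      rwa [he] at this
    -- use associativity
    have hmem : hpow c (k + 2) ∈ ⋃ x ∈ hadd (hpow b (k + 2)) (mul (hpow b (k + 1)) p),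
        hadd x (mul c t) := by
      refine Set.mem_iUnion₂.2 ⟨mul c (hpow b (k + 1)), h2, ?_⟩
      exact h1
    rw [hadd_assoc] at hmem
    obtain ⟨y, hy, hcy⟩ := Set.mem_iUnion₂.1 hmem
    refine ⟨y, ?_, hcy⟩
    exact T.hadd_subset' _ (T.mul_mem' (hpow b (k + 1)) p hp) _ (T.mul_mem' c t ht) hy

lemma mem_of_subset_hadd {J : Hyperideal R} {x y : R} (hx : x ∈ (J : Set R))
    (h : hadd x y ⊆ (J : Set R)) : y ∈ (J : Set R) := by
  obtain ⟨e, he⟩ := hadd_nonempty x y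
  exact J.hadd_subset' (neg x) (J.neg_mem' x hx) e (h he) (reversible x y e he)

lemma mem_of_hadd_mem_s9 {J : Hyperideal R} {x t c : R} (ht : t ∈ (J : Set R))
    (hc : c ∈ (J : Set R)) (h : c ∈ hadd x t) : x ∈ (J : Set R) := by
  rw [hadd_comm] at h
  exact J.hadd_subset' (neg t) (J.neg_mem' t ht) c hc (reversible t x c h)

lemma exists_mul_not_mem {J : Hyperideal R} {a b p : R} (hab : mul a b ∈ (J : Set R))
    (hap : mul a p ∉ (J : Set R)) : ∃ c ∈ hadd b p, mul a c ∉ (J : Set R) := by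
  by_contra h
  push_neg at h
  apply hap
  apply mem_of_subset_hadd hab
  rw [← distrib]
  rintro x ⟨c, hc, rfl⟩
  exact h c hc
/-- STATEMENT 11: If `T` is `φ`-primary for some `φ ≤ φ₃`, then `T` is `w`-primary. -/
theorem phiPrimary_le_phi3_wPrimary {R : Type u} [KrasnerHyperring R]
    (φ : Hyperideal R → Set R) (hφ : MapsToIdealOrEmpty φ)
    (hle : ∀ I : Hyperideal R, φ I ⊆ idealPow I 3)
    (T : Hyperideal R) (hT : IsPhiPrimary φ T) :
    IsPhiPrimary phiW T := by
  obtain ⟨hproper, hprim⟩ := hT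
  refine ⟨hproper, ?_⟩
  intro a b hab hnw
  by_contra hcon
  push_neg at hcon
  obtain ⟨haT, hbk⟩ := hcon
  have habT : mul a b ∈ (T : Set R) := hab
  have habφ : mul a b ∈ φ T := by
    by_contra h
    rcases hprim a b hab h with h' | ⟨k, hk, hk'⟩
    · exact haT h'
    · exact hbk k hk hk'
  obtain he | ⟨J, hJ⟩ := hφ T
  · rw [he] at habφ; exact habφ
  rw [hJ] at habφ
  have hprim' : ∀ x y : R, mul x y ∈ (T : Set R) → mul x y ∉ (J : Set R) →
      x ∈ (T : Set R) ∨ ∃ k : ℕ, 0 < k ∧ hpow y k ∈ (T : Set R) := by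
    intro x y h1 h2
    exact hprim x y h1 (by rw [hJ]; exact h2)
  -- from `c^k ∈ T` and `c ∈ hadd b p` with `p ∈ T`, derive a contradiction with hbk
  have hbinom : ∀ p ∈ (T : Set R), ∀ c ∈ hadd b p,
      (∃ k : ℕ, 0 < k ∧ hpow c k ∈ (T : Set R)) → False := by
    rintro p hp c hc ⟨k, hk, hck⟩
    obtain ⟨k', rfl⟩ : ∃ k', k = k' + 1 := ⟨k - 1, (Nat.succ_pred_eq_of_pos hk).symm⟩
    obtain ⟨t, ht, hbt⟩ := hpow_hadd_mem T hp hc k'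
    exact hbk (k' + 1) (Nat.succ_pos _) (mem_of_hadd_mem_s9 ht hck hbt)
  -- Step 1 : a ∘ T ⊆ J
  have haTJ : ∀ p ∈ (T : Set R), mul a p ∈ (J : Set R) := by
    intro p hp
    by_contra hap
    obtain ⟨c, hc, hacJ⟩ := exists_mul_not_mem habφ hap
    have hacT : mul a c ∈ (T : Set R) := by
      have himg : (fun x => mul a x) '' hadd b p ⊆ (T : Set R) := by
        rw [distrib]
        exact T.hadd_subset' _ hab _ (T.mul_mem' a p hp)
      exact himg ⟨c, hc, rfl⟩
    rcases hprim' a c hacT hacJ with h | h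
    · exact haT h
    · exact hbinom p hp c hc h
  -- Step 2 : T ∘ b ⊆ J
  have hbTJ : ∀ q ∈ (T : Set R), mul q b ∈ (J : Set R) := by
    intro q hq
    by_contra hqb
    have hba : mul b a ∈ (J : Set R) := by rwa [mul_comm]
    have hbq : mul b q ∉ (J : Set R) := by rwa [mul_comm]
    obtain ⟨c, hc, hbcJ⟩ := exists_mul_not_mem hba hbq
    have hbcT : mul b c ∈ (T : Set R) := by
      have himg : (fun x => mul b x) '' hadd a q ⊆ (T : Set R) := by
        rw [distrib]
        refine T.hadd_subset' _ ?_ _ (T.mul_mem' b q hq)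
        rw [mul_comm]; exact habT
      exact himg ⟨c, hc, rfl⟩
    have hcbT : mul c b ∈ (T : Set R) := by rwa [mul_comm]
    have hcbJ : mul c b ∉ (J : Set R) := by rwa [mul_comm] at hbcJ
    rcases hprim' c b hcbT hcbJ with h | ⟨k, hk, hk'⟩
    · -- c ∈ T and c ∈ hadd a q  ⇒  a ∈ T
      exact haT (mem_of_hadd_mem_s9 hq h hc)
    · exact hbk k hk hk'
  -- Step 3 : T ∘ T ⊆ J
  have hTTJ : ∀ p ∈ (T : Set R), ∀ q ∈ (T : Set R), mul p q ∈ (J : Set R) := by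
    intro p hp q hq
    by_contra hpq
    have hpb : mul p b ∈ (J : Set R) := hbTJ p hp
    obtain ⟨d, hd, hpdJ⟩ := exists_mul_not_mem hpb hpq
    have hadJ : mul a d ∈ (J : Set R) := by
      have himg : (fun x => mul a x) '' hadd b q ⊆ (J : Set R) := by
        rw [distrib]
        exact J.hadd_subset' _ habφ _ (haTJ q hq)
      exact himg ⟨d, hd, rfl⟩
    have hdaJ : mul d a ∈ (J : Set R) := by rwa [mul_comm] at hadJ
    have hdpJ : mul d p ∉ (J : Set R) := by rwa [mul_comm] at hpdJ
    obtain ⟨c, hc, hdcJ⟩ := exists_mul_not_mem hdaJ hdpJ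
    have hcdT : mul c d ∈ (T : Set R) := by
      have himg : (fun x => mul c x) '' hadd b q ⊆ (T : Set R) := by
        rw [distrib]
        refine T.hadd_subset' _ ?_ _ (T.mul_mem' c q hq)
        -- mul c b ∈ T since c ∈ hadd a p
        have himg2 : (fun x => mul b x) '' hadd a p ⊆ (T : Set R) := by
          rw [distrib]
          refine T.hadd_subset' _ ?_ _ (T.mul_mem' b p hp)
          rw [mul_comm]; exact habT
        have : mul b c ∈ (T : Set R) := himg2 ⟨c, hc, rfl⟩
        rwa [mul_comm] at this
      exact himg ⟨d, hd, rfl⟩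
    have hcdJ : mul c d ∉ (J : Set R) := by rwa [mul_comm] at hdcJ
    rcases hprim' c d hcdT hcdJ with h | h
    · exact haT (mem_of_hadd_mem_s9 hp h hc)
    · exact hbinom q hq d hd h
  -- Conclusion : T² ⊆ J ⊆ φ T ⊆ T³, hence all powers contain ab
  have hJ3 : (J : Set R) ⊆ idealPow T 3 := by rw [← hJ]; exact hle T
  have H2 : ∀ p ∈ (T : Set R), ∀ q ∈ (T : Set R), mul p q ∈ idealPow T 3 :=
    fun p hp q hq => hJ3 (hTTJ p hp q hq)
  have h3 : mul a b ∈ idealPow T 3 := hJ3 habφ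
  have hup : ∀ n : ℕ, mul a b ∈ idealPow T (n + 3) := by
    intro n
    induction n with
    | zero => exact h3
    | succ m ih => exact idealPow_up T H2 (m + 1) ih
  have h2 : mul a b ∈ idealPow T 2 := idealPow_succ_subset T 1 h3
  have h1 : mul a b ∈ idealPow T 1 := subset_genIdeal habT
  apply hnw
  refine Set.mem_iInter.2 fun n => Set.mem_iInter.2 fun hn => ?_
  match n, hn with
  | 1, _ => exact h1
  | 2, _ => exact h2
  | (m + 3), _ => exact hup m

end KrasnerHyperring
end
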